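/- Let γ ∈ (0,1), let m ≥ 1, let r = ⌈log₂(2m+4)⌉ and s = ⌈√(2/γ)⌉. Let v_1, …, v_m, v_b, v_t, v' ∈ ℝ^d each of Euclidean norm at most 1, and define the polynomial p : ℝ^d → ℝ by p(x) = m + 5/2 − Σ_{i=1}^m (T_s(1 − ⟨v_i, x⟩))^r − (T_s(1 − ⟨x − v_b, v'⟩/2))^r − (T_s(1 − ⟨v_t − x, v'⟩/2))^r, where T_s is the s-th Chebyshev polynomial of the first kind. Then for every x ∈ ℝ^d with ‖x‖ ≤ 1 such that at least one of the following holds: (i) ⟨v_i, x⟩ ≤ −γ for some i ∈ {1,…,m}, (ii) ⟨x, v'⟩ ≤ ⟨v_b, v'⟩ − γ, or (iii) ⟨x, v'⟩ ≥ ⟨v_t, v'⟩ + γ, it holds that p(x) ≤ −1/2. -/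

import Mathlib

open Finset RealInnerProductSpace

section ChebAux
open Polynomial Polynomial.Chebyshev

lemma cheb_growth (y : ℝ) (hy : 1 ≤ y) (n : ℕ) :
    1 + (n : ℝ)^2 * (y - 1) ≤ (T ℝ (n : ℤ)).eval y ∧
      (2 * (n : ℝ) + 1) * (y - 1) ≤ (T ℝ ((n : ℤ) + 1)).eval y - (T ℝ (n : ℤ)).eval y := by
  induction n with
  | zero => simp [T_zero, T_one]
  | succ n ih =>
    obtain ⟨h1, h2⟩ := ih
    have hrec : (T ℝ ((n : ℤ) + 2)).eval y
        = 2 * y * (T ℝ ((n : ℤ) + 1)).eval y - (T ℝ (n : ℤ)).eval y := by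
      rw [T_add_two]; simp [eval_mul, eval_sub]
    have hT1 : (1 : ℝ) + ((n : ℝ) + 1)^2 * (y - 1) ≤ (T ℝ ((n : ℤ) + 1)).eval y := by
      nlinarith
    have hi3 : ((n : ℤ) + 1 + 1) = (n : ℤ) + 2 := by ring
    push_cast
    rw [hi3, hrec]
    constructor
    · nlinarith
    · nlinarith [mul_le_mul_of_nonneg_left hT1 (by linarith : (0:ℝ) ≤ 2*(y-1)),
        sq_nonneg ((n:ℝ)+1), mul_nonneg (sq_nonneg ((n:ℝ)+1)) (by linarith : (0:ℝ) ≤ y-1)]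

lemma cheb_abs_le_one (n : ℕ) (y : ℝ) (h1 : -1 ≤ y) (h2 : y ≤ 1) :
    |(T ℝ (n : ℤ)).eval y| ≤ 1 := by
  have : y = Real.cos (Real.arccos y) := (Real.cos_arccos h1 h2).symm
  rw [this, T_real_cos]
  exact Real.abs_cos_le_one _

lemma cheb_ge_two (n : ℕ) (y δ : ℝ) (hδ : 0 ≤ δ) (hy : 1 + δ ≤ y)
    (hnδ : 1 ≤ (n : ℝ)^2 * δ) : 2 ≤ (T ℝ (n : ℤ)).eval y := by
  have h := (cheb_growth y (by linarith) n).1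
  nlinarith [sq_nonneg (n : ℝ)]

lemma cheb_pow_ge_neg_one (n k : ℕ) (y : ℝ) (hy : -1 ≤ y) :
    -1 ≤ ((T ℝ (n : ℤ)).eval y) ^ k := by
  rcases le_or_gt y 1 with h | h
  · have habs : |((T ℝ (n : ℤ)).eval y) ^ k| ≤ 1 := by
      rw [abs_pow]
      exact pow_le_one₀ (abs_nonneg _) (cheb_abs_le_one n y hy h)
    linarith [(abs_le.mp habs).1]
  · have h1 : (1 : ℝ) ≤ (T ℝ (n : ℤ)).eval y := by
      have := (cheb_growth y h.le n).1
      nlinarith [sq_nonneg (n : ℝ)]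
    linarith [one_le_pow₀ h1 (n := k)]

end ChebAux

theorem sep_poly_eval_le_neg_half {d m : ℕ} (hm : 1 ≤ m) (γ : ℝ)
    (hγ : γ ∈ Set.Ioo (0 : ℝ) 1)
    (r s : ℕ) (hr : r = ⌈Real.logb 2 (2 * m + 4)⌉₊) (hs : s = ⌈Real.sqrt (2 / γ)⌉₊)
    (v : Fin m → EuclideanSpace ℝ (Fin d)) (vb vt v' : EuclideanSpace ℝ (Fin d))
    (hv : ∀ i, ‖v i‖ ≤ 1) (hvb : ‖vb‖ ≤ 1) (hvt : ‖vt‖ ≤ 1) (hv' : ‖v'‖ ≤ 1)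
    (x : EuclideanSpace ℝ (Fin d)) (hx : ‖x‖ ≤ 1)
    (h : (∃ i, ⟪v i, x⟫ ≤ -γ) ∨ ⟪x, v'⟫ ≤ ⟪vb, v'⟫ - γ ∨ ⟪x, v'⟫ ≥ ⟪vt, v'⟫ + γ) :
    (m : ℝ) + 5 / 2
      - ∑ i, ((Polynomial.Chebyshev.T ℝ (s : ℤ)).eval (1 - ⟪v i, x⟫)) ^ r
      - ((Polynomial.Chebyshev.T ℝ (s : ℤ)).eval (1 - ⟪x - vb, v'⟫ / 2)) ^ r
      - ((Polynomial.Chebyshev.T ℝ (s : ℤ)).eval (1 - ⟪vt - x, v'⟫ / 2)) ^ r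
      ≤ -(1 / 2) := by
  classical
  obtain ⟨hγ0, hγ1⟩ := hγ
  set C : ℝ → ℝ := fun y => (Polynomial.Chebyshev.T ℝ (s : ℤ)).eval y with hC
  -- s² γ ≥ 2
  have hsle : Real.sqrt (2 / γ) ≤ (s : ℝ) := by rw [hs]; exact Nat.le_ceil _
  have hs2 : 2 ≤ (s : ℝ)^2 * γ := by
    have h1 : 2 / γ ≤ (s : ℝ)^2 := by
      have := Real.sq_sqrt (by positivity : (0:ℝ) ≤ 2 / γ)
      nlinarith [Real.sqrt_nonneg (2 / γ)]
    rw [div_le_iff₀ hγ0] at h1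
    linarith
  -- 2^r ≥ 2m+4
  have hr2 : (2 * (m : ℝ) + 4) ≤ 2 ^ r := by
    have hle : Real.logb 2 (2 * (m:ℝ) + 4) ≤ (r : ℝ) := by
      rw [hr]; exact Nat.le_ceil _
    have hpos : (0:ℝ) < 2 * (m:ℝ) + 4 := by positivity
    calc (2 * (m : ℝ) + 4) = (2:ℝ) ^ Real.logb 2 (2 * (m:ℝ) + 4) :=
          (Real.rpow_logb (by norm_num) (by norm_num) hpos).symm
      _ ≤ (2:ℝ) ^ (r : ℝ) := Real.rpow_le_rpow_of_exponent_le (by norm_num) hle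
      _ = 2 ^ r := by rw [Real.rpow_natCast]
  -- Cauchy-Schwarz facts
  have hcs : ∀ i, |⟪v i, x⟫| ≤ 1 := fun i => by
    calc |⟪v i, x⟫| ≤ ‖v i‖ * ‖x‖ := abs_real_inner_le_norm _ _
      _ ≤ 1 := mul_le_one₀ (hv i) (norm_nonneg x) hx
  have hcsb : |⟪x - vb, v'⟫| ≤ 2 := by
    calc |⟪x - vb, v'⟫| ≤ ‖x - vb‖ * ‖v'‖ := abs_real_inner_le_norm _ _
      _ ≤ 2 := by
        have h1 : ‖x - vb‖ ≤ 2 := by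
          calc ‖x - vb‖ ≤ ‖x‖ + ‖vb‖ := norm_sub_le _ _
            _ ≤ 2 := by linarith
        nlinarith [norm_nonneg (x - vb), norm_nonneg v']
  have hcst : |⟪vt - x, v'⟫| ≤ 2 := by
    calc |⟪vt - x, v'⟫| ≤ ‖vt - x‖ * ‖v'‖ := abs_real_inner_le_norm _ _
      _ ≤ 2 := by
        have h1 : ‖vt - x‖ ≤ 2 := by
          calc ‖vt - x‖ ≤ ‖vt‖ + ‖x‖ := norm_sub_le _ _
            _ ≤ 2 := by linarith
        nlinarith [norm_nonneg (vt - x), norm_nonneg v']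
  -- lower bounds -1 for every term
  have hlowi : ∀ i, -1 ≤ (C (1 - ⟪v i, x⟫)) ^ r := fun i =>
    cheb_pow_ge_neg_one s r _ (by have := (abs_le.mp (hcs i)).2; linarith)
  have hlowb : -1 ≤ (C (1 - ⟪x - vb, v'⟫ / 2)) ^ r :=
    cheb_pow_ge_neg_one s r _ (by have := (abs_le.mp hcsb).2; linarith)
  have hlowt : -1 ≤ (C (1 - ⟪vt - x, v'⟫ / 2)) ^ r :=
    cheb_pow_ge_neg_one s r _ (by have := (abs_le.mp hcst).2; linarith)
  -- big-term helper
  have hbig : ∀ y : ℝ, 1 + γ / 2 ≤ y → (2 * (m:ℝ) + 4) ≤ (C y) ^ r := by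
    intro y hy
    have h2 : 2 ≤ C y := cheb_ge_two s y (γ/2) (by linarith) hy (by nlinarith)
    calc (2 * (m:ℝ) + 4) ≤ 2 ^ r := hr2
      _ ≤ (C y) ^ r := pow_le_pow_left₀ (by norm_num) h2 r
  rcases h with ⟨i₀, hi₀⟩ | hb | ht
  · -- case (i)
    have hbigi : (2 * (m:ℝ) + 4) ≤ (C (1 - ⟪v i₀, x⟫)) ^ r :=
      hbig _ (by linarith)
    have hsum : (m : ℝ) + 5 ≤ ∑ i, (C (1 - ⟪v i, x⟫)) ^ r := by
      have hstep : ∀ i ∈ Finset.univ, (if i = i₀ then (2*(m:ℝ)+5) else 0) + (-1)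
          ≤ (C (1 - ⟪v i, x⟫)) ^ r := by
        intro i _
        by_cases hii : i = i₀
        · subst hii; rw [if_pos rfl]; linarith
        · rw [if_neg hii]; have := hlowi i; linarith
      have := Finset.sum_le_sum hstep
      rw [Finset.sum_add_distrib, Finset.sum_ite_eq' Finset.univ i₀
        (fun _ => (2*(m:ℝ)+5)), if_pos (Finset.mem_univ i₀), Finset.sum_const,
        Finset.card_univ, Fintype.card_fin, nsmul_eq_mul] at this
      push_cast at this ⊢
      linarith
    linarith
  · -- case (ii)
    have harg : 1 + γ / 2 ≤ 1 - ⟪x - vb, v'⟫ / 2 := by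
      rw [inner_sub_left]; linarith
    have hbigb := hbig _ harg
    have hsum : -(m : ℝ) ≤ ∑ i, (C (1 - ⟪v i, x⟫)) ^ r := by
      have := Finset.sum_le_sum (fun i (_ : i ∈ Finset.univ) => hlowi i)
      rw [Finset.sum_const, Finset.card_univ, Fintype.card_fin, nsmul_eq_mul] at this
      push_cast at this ⊢
      linarith
    linarith
  · -- case (iii)
    have harg : 1 + γ / 2 ≤ 1 - ⟪vt - x, v'⟫ / 2 := by
      rw [inner_sub_left]; linarith
    have hbigt := hbig _ harg
    have hsum : -(m : ℝ) ≤ ∑ i, (C (1 - ⟪v i, x⟫)) ^ r := by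
      have := Finset.sum_le_sum (fun i (_ : i ∈ Finset.univ) => hlowi i)
      rw [Finset.sum_const, Finset.card_univ, Fintype.card_fin, nsmul_eq_mul] at this
      push_cast at this ⊢
      linarith
    linarith
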